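/- arXiv:2502.08263 — 3 statements merged into one kernel-verified Lean document; each statement's English description precedes it below -/
import Mathlib

section
/- (Degeneracy map on quasi-modular functions, Proposition 5.7) Assume 𝔽_q(T) ⊆ F, let 𝔪 ⊆ A be a nonzero ideal with 𝔭 ∤ 𝔪, and assume E satisfies its functional equation for all γ ∈ GL₂(A). Let f : Ω → L be of the form f = Σ_{i=0}^{ℓ} f_{i,E}·E^i where each f_{i,E} is modular of weight k−2i and type m−i for Γ₀(𝔪). Then δ_𝔭f = Σ_{j=0}^{ℓ} c_j·E^j, where c_j := Σ_{s=0}^{ℓ−j} (s+j choose j)·℘^{−s−j}·(−E_𝔭)^s·δ_𝔭f_{s+j,E}, each c_j is modular of weight k−2j and type m−j for Γ₀(𝔪𝔭), and in particular δ_𝔭f is quasi-modular of weight k, type m and depth ≤ ℓ for Γ₀(𝔪𝔭). Moreover c_ℓ = ℘^{−ℓ}·δ_𝔭f_{ℓ,E}, so if f_{ℓ,E} ≠ 0 then c_ℓ ≠ 0, i.e. δ_𝔭 preserves the depth. -/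
noncomputable section

namespace DrinfeldQM

variable {L : Type*} [Field L]

/-- Entry `(i,j)` of `γ ∈ GL₂(F)`, viewed inside `L`. -/
def Mc (F : Subfield L) (γ : GL (Fin 2) F) (i j : Fin 2) : L :=
  ((γ : Matrix (Fin 2) (Fin 2) F) i j : L)

/-- Determinant of `γ ∈ GL₂(F)`, viewed inside `L`. -/
def detL (F : Subfield L) (γ : GL (Fin 2) F) : L :=
  ((γ : Matrix (Fin 2) (Fin 2) F).det : L)

/-- Automorphy factor `cz + d`. -/
def jf (F : Subfield L) (γ : GL (Fin 2) F) (z : L) : L :=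
  Mc F γ 1 0 * z + Mc F γ 1 1

/-- Fractional linear action of `GL₂(F)` on `L` (restricting to `Ω`). -/
def act (F : Subfield L) (γ : GL (Fin 2) F) (z : L) : L :=
  (Mc F γ 0 0 * z + Mc F γ 0 1) / jf F γ z

/-- The Drinfeld upper half plane `Ω = L ∖ F`. -/
def Omega (F : Subfield L) : Set L := {z | z ∉ F}

/-- The slash operator `f |_{k,m} γ` of weight `k` and type `m`. -/
def slash (F : Subfield L) (k m : ℤ) (f : L → L) (γ : GL (Fin 2) F) : L → L :=
  fun z => detL F γ ^ m * jf F γ z ^ (-k) * f (act F γ z)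

/-- `f` is quasi-modular of weight `k`, type `m` and depth `≤ ℓ` for the set `S ⊆ GL₂(F)`
with coefficient family `fam` (only the indices `0,…,ℓ` of `fam` are relevant). -/
def IsQM (F : Subfield L) (S : Set (GL (Fin 2) F)) (k m : ℤ) (ℓ : ℕ)
    (f : L → L) (fam : ℕ → L → L) : Prop :=
  Set.EqOn (fam 0) f (Omega F) ∧
    ∀ γ ∈ S, ∀ z ∈ Omega F,
      slash F k m f γ z =
        ∑ i ∈ Finset.range (ℓ + 1), fam i z * (Mc F γ 1 0 / jf F γ z) ^ i

/-- The coefficient family of the `i`-th coefficient `f_i` of a quasi-modular function with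
coefficient family `fam`:  `(f_i)_h = ((h+i) choose i) · f_{h+i}`. -/
def shiftFam (i : ℕ) (fam : ℕ → L → L) : ℕ → L → L :=
  fun h z => ((h + i).choose i : L) * fam (h + i) z

/-- The double-slash operator `f ∥_{k,m} γ` of a quasi-modular function of depth `≤ ℓ` with
coefficient family `fam`. -/
def dslash (F : Subfield L) (k m : ℤ) (ℓ : ℕ) (fam : ℕ → L → L)
    (γ : GL (Fin 2) F) : L → L :=
  fun z => ∑ i ∈ Finset.range (ℓ + 1),
    (-(Mc F γ 1 0) / jf F γ z) ^ i * detL F γ ^ (m - (i : ℤ)) *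
      jf F γ z ^ (2 * (i : ℤ) - k) * fam i (act F γ z)

/-- The double-slash operator on polynomial-valued functions `P : Ω → L[X]`:
`(P ∥_{k,m} γ)(z, X) = (det γ)^m (cz+d)^{-k} P(γ·z, ((cz+d)²/det γ)(X - c/(cz+d)))`. -/
def pdslash (F : Subfield L) (k m : ℤ) (P : L → Polynomial L)
    (γ : GL (Fin 2) F) : L → Polynomial L :=
  fun z =>
    Polynomial.C (detL F γ ^ m * jf F γ z ^ (-k)) *
      (P (act F γ z)).comp
        (Polynomial.C (jf F γ z ^ 2 / detL F γ) *
          (Polynomial.X - Polynomial.C (Mc F γ 1 0 / jf F γ z)))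

/-- The associated polynomial `P_f(z, X) = ∑_{i=0}^{ℓ} f_i(z) Xⁱ`. -/
def assocPoly (ℓ : ℕ) (fam : ℕ → L → L) : L → Polynomial L :=
  fun z => ∑ i ∈ Finset.range (ℓ + 1), Polynomial.C (fam i z) * Polynomial.X ^ i

/-- `E` satisfies the functional equation of the false Eisenstein series (weight 2, type 1,
depth 1, coefficient family `(E, -π⁻¹)`) for all `γ ∈ S`. -/
def EFunEq (F : Subfield L) (S : Set (GL (Fin 2) F)) (π : L) (E : L → L) : Prop :=
  ∀ γ ∈ S, ∀ z ∈ Omega F,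
    E (act F γ z) =
      (detL F γ)⁻¹ * jf F γ z ^ 2 * (E z - Mc F γ 1 0 / (π * jf F γ z))

variable {Fq : Type*} [Field Fq] [Fintype Fq]

/-- The image in `L` of a polynomial `r ∈ A = Fq[T]` under `A → F ⊆ L`. -/
def iL (F : Subfield L) (ι : Polynomial Fq →+* F) (r : Polynomial Fq) : L := (ι r : L)

/-- `γ ∈ GL₂(F)` lies in `Γ₀(𝔞) ⊆ GL₂(A)`: its entries come from a matrix `M` over
`A = Fq[T]` with unit determinant whose lower-left entry lies in `𝔞`.
Taking `𝔞 = ⊤` expresses membership in `GL₂(A)`. -/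
def InGamma0 (F : Subfield L) (ι : Polynomial Fq →+* F)
    (𝔞 : Ideal (Polynomial Fq)) (γ : GL (Fin 2) F) : Prop :=
  ∃ M : Matrix (Fin 2) (Fin 2) (Polynomial Fq),
    (∀ i j, iL F ι (M i j) = Mc F γ i j) ∧ IsUnit M.det ∧ M 1 0 ∈ 𝔞

/-- `γ ∈ GL₂(F)` lies in the principal congruence subgroup `Γ(𝔫) ⊆ GL₂(A)`. -/
def InGammaN (F : Subfield L) (ι : Polynomial Fq →+* F)
    (𝔫 : Ideal (Polynomial Fq)) (γ : GL (Fin 2) F) : Prop :=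
  ∃ M : Matrix (Fin 2) (Fin 2) (Polynomial Fq),
    (∀ i j, iL F ι (M i j) = Mc F γ i j) ∧ IsUnit M.det ∧
      ∀ i j, M i j - (1 : Matrix (Fin 2) (Fin 2) (Polynomial Fq)) i j ∈ 𝔫

/-- `g` is modular of weight `w` and type `t` for `Γ₀(𝔞)`. -/
def IsModularOn (F : Subfield L) (ι : Polynomial Fq →+* F)
    (𝔞 : Ideal (Polynomial Fq)) (w t : ℤ) (g : L → L) : Prop :=
  ∀ γ : GL (Fin 2) F, InGamma0 F ι 𝔞 γ → ∀ z ∈ Omega F, slash F w t g γ z = g z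

/-- The degeneracy map `(δ_𝔭 g)(z) = g(℘ z)`. -/
def deltaP (F : Subfield L) (ι : Polynomial Fq →+* F) (℘ : Polynomial Fq)
    (g : L → L) : L → L := fun z => g (iL F ι ℘ * z)

/-- The Atkin–Lehner operator `(U_𝔭 g)(z) = ∑_{Q ∈ A, deg Q < deg ℘} g((z+Q)/℘)`,
where `Q = ∑ᵢ cᵢ Tⁱ` ranges over polynomials of degree `< deg ℘`. -/
def UP (F : Subfield L) (ι : Polynomial Fq →+* F) (℘ : Polynomial Fq)
    (g : L → L) : L → L :=
  fun z => ∑ c : Fin ℘.natDegree → Fq,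
    g ((z + iL F ι (∑ i : Fin ℘.natDegree, Polynomial.C (c i) * Polynomial.X ^ (i : ℕ))) /
      iL F ι ℘)

/-- The `𝔭`-stabilization `E_𝔭 = E - ℘·δ_𝔭E`. -/
def Ep (F : Subfield L) (ι : Polynomial Fq →+* F) (℘ : Polynomial Fq)
    (E : L → L) : L → L := fun z => E z - iL F ι ℘ * deltaP F ι ℘ E z

section Helpers

variable {L : Type*} [Field L] {Fq : Type*} [Field Fq] [Fintype Fq]
variable (F : Subfield L) (ι : Polynomial Fq →+* F)

lemma detL_ne_zero (γ : GL (Fin 2) F) : detL F γ ≠ 0 := by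
  have h : IsUnit ((γ : Matrix (Fin 2) (Fin 2) F).det) :=
    (Matrix.GeneralLinearGroup.det γ).isUnit
  have h0 : (γ : Matrix (Fin 2) (Fin 2) F).det ≠ 0 := h.ne_zero
  simpa [detL] using h0

lemma detL_eq (γ : GL (Fin 2) F) :
    detL F γ = Mc F γ 0 0 * Mc F γ 1 1 - Mc F γ 0 1 * Mc F γ 1 0 := by
  simp [detL, Matrix.det_fin_two, Mc]

lemma Mc_mem (γ : GL (Fin 2) F) (i j : Fin 2) : Mc F γ i j ∈ F := by
  simp [Mc]

lemma mul_mem_Omega {x z : L} (hx : x ∈ F) (hx0 : x ≠ 0) (hz : z ∈ Omega F) :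
    x * z ∈ Omega F := by
  intro h
  exact hz (by simpa [hx0] using F.mul_mem (F.inv_mem hx) h)

lemma jf_ne_zero (γ : GL (Fin 2) F) {z : L} (hz : z ∈ Omega F) : jf F γ z ≠ 0 := by
  intro h
  rcases eq_or_ne (Mc F γ 1 0) 0 with hc | hc
  · have hd : Mc F γ 1 1 = 0 := by simpa [jf, hc] using h
    exact detL_ne_zero F γ (by simp [detL_eq, hc, hd])
  · apply hz
    rw [jf] at h
    have : z = -Mc F γ 1 1 / Mc F γ 1 0 := by
      field_simp
      linear_combination h
    rw [this]
    exact F.div_mem (F.neg_mem (Mc_mem F γ 1 1)) (Mc_mem F γ 1 0)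

lemma act_mem_Omega (γ : GL (Fin 2) F) {z : L} (hz : z ∈ Omega F) :
    act F γ z ∈ Omega F := by
  intro h
  set w := act F γ z with hw
  have hj := jf_ne_zero F γ hz
  have hkey : Mc F γ 0 0 * z + Mc F γ 0 1 = w * (Mc F γ 1 0 * z + Mc F γ 1 1) := by
    rw [hw, act]
    rw [div_mul_eq_mul_div, eq_div_iff hj, jf]
  rcases eq_or_ne (Mc F γ 0 0 - w * Mc F γ 1 0) 0 with h0 | h0
  · have hb : Mc F γ 0 1 = w * Mc F γ 1 1 := by linear_combination hkey - z * h0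
    have ha : Mc F γ 0 0 = w * Mc F γ 1 0 := by linear_combination h0
    exact detL_ne_zero F γ (by rw [detL_eq, ha, hb]; ring)
  · apply hz
    have : z = (w * Mc F γ 1 1 - Mc F γ 0 1) / (Mc F γ 0 0 - w * Mc F γ 1 0) := by
      field_simp
      linear_combination hkey
    rw [this]
    exact F.div_mem (F.sub_mem (F.mul_mem h (Mc_mem F γ 1 1)) (Mc_mem F γ 0 1))
      (F.sub_mem (Mc_mem F γ 0 0) (F.mul_mem h (Mc_mem F γ 1 0)))

end Helpers
section Scale
variable {L : Type*} [Field L] {Fq : Type*} [Field Fq] [Fintype Fq]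
variable (F : Subfield L) (ι : Polynomial Fq →+* F)

lemma InGamma0_mono {a b : Ideal (Polynomial Fq)} (h : a ≤ b) {γ : GL (Fin 2) F} :
    InGamma0 F ι a γ → InGamma0 F ι b γ := by
  rintro ⟨M, h1, h2, h3⟩; exact ⟨M, h1, h2, h h3⟩

lemma exists_scaled (hι : Function.Injective ι) (℘ : Polynomial Fq)
    (𝔪 : Ideal (Polynomial Fq))
    (γ : GL (Fin 2) F) (hγ : InGamma0 F ι (𝔪 * Ideal.span {℘}) γ) :
    ∃ γ' : GL (Fin 2) F, InGamma0 F ι 𝔪 γ' ∧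
      Mc F γ' 0 0 = Mc F γ 0 0 ∧ Mc F γ' 0 1 = iL F ι ℘ * Mc F γ 0 1 ∧
      iL F ι ℘ * Mc F γ' 1 0 = Mc F γ 1 0 ∧ Mc F γ' 1 1 = Mc F γ 1 1 ∧
      detL F γ' = detL F γ := by
  obtain ⟨M, hM, hdet, hmem⟩ := hγ
  obtain ⟨c', hc', hceq⟩ := Ideal.mem_mul_span_singleton.mp hmem
  set N : Matrix (Fin 2) (Fin 2) F :=
    !![ι (M 0 0), ι (℘ * M 0 1); ι c', ι (M 1 1)] with hNdef
  have hNdet : N.det = ι M.det := by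
    rw [hNdef, Matrix.det_fin_two_of, Matrix.det_fin_two, ← map_mul, ← map_mul, ← map_sub]
    congr 1
    rw [← hceq]; ring
  have hMdet0 : M.det ≠ 0 := hdet.ne_zero
  have hN : N.det ≠ 0 := by
    rw [hNdet]
    intro h
    exact hMdet0 (hι (by simpa using h))
  refine ⟨Matrix.GeneralLinearGroup.mkOfDetNeZero N hN, ?_, ?_, ?_, ?_, ?_, ?_⟩
  · refine ⟨!![M 0 0, ℘ * M 0 1; c', M 1 1], ?_, ?_, ?_⟩
    · intro i j
      fin_cases i <;> fin_cases j <;>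
        simp [iL, Mc, Matrix.GeneralLinearGroup.mkOfDetNeZero, hNdef,
          Matrix.GeneralLinearGroup.mk', Matrix.unitOfDetInvertible]
    · have : (!![M 0 0, ℘ * M 0 1; c', M 1 1] : Matrix (Fin 2) (Fin 2) (Polynomial Fq)).det
          = M.det := by
        rw [Matrix.det_fin_two_of, Matrix.det_fin_two, ← hceq]; ring
      rw [this]; exact hdet
    · simpa using hc'
  all_goals {
    have hFeq : ∀ i j, (ι (M i j) : F) = (γ : Matrix (Fin 2) (Fin 2) F) i j := by
      intro i j
      exact Subtype.coe_injective (hM i j)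
    simp [Mc, detL, Matrix.GeneralLinearGroup.mkOfDetNeZero,
      Matrix.GeneralLinearGroup.mk', Matrix.unitOfDetInvertible, hNdef, iL,
      Matrix.det_fin_two, ← hFeq, ← hceq]
    try push_cast
    try ring }

end Scale
section Transf
set_option linter.unusedSectionVars false
variable {L : Type*} [Field L] {Fq : Type*} [Field Fq] [Fintype Fq]
variable (F : Subfield L) (ι : Polynomial Fq →+* F)

lemma iL_mem (r : Polynomial Fq) : iL F ι r ∈ F := by
  simp [iL]

lemma iL_ne_zero (hι : Function.Injective ι) {r : Polynomial Fq} (hr : r ≠ 0) :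
    iL F ι r ≠ 0 := by
  intro h
  exact hr (hι (Subtype.coe_injective (by simpa [iL] using h)))

lemma deltaP_modular (hι : Function.Injective ι) {℘ : Polynomial Fq} (h℘ : ℘ ≠ 0)
    (𝔪 : Ideal (Polynomial Fq)) (w t : ℤ) (g : L → L)
    (hg : IsModularOn F ι 𝔪 w t g) :
    IsModularOn F ι (𝔪 * Ideal.span {℘}) w t (deltaP F ι ℘ g) := by
  intro γ hγ z hz
  obtain ⟨γ', hγ', ha, hb, hcc, hd, hdet⟩ := exists_scaled F ι hι ℘ 𝔪 γ hγ
  set P := iL F ι ℘ with hP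
  have hP0 : P ≠ 0 := iL_ne_zero F ι hι h℘
  have hPz : P * z ∈ Omega F := mul_mem_Omega F (iL_mem F ι ℘) hP0 hz
  have hjf' : jf F γ' (P * z) = jf F γ z := by
    simp only [jf]; rw [← hd, ← hcc]; ring
  have hact' : act F γ' (P * z) = P * act F γ z := by
    have h1 : Mc F γ' 0 0 * (P * z) + Mc F γ' 0 1
        = P * (Mc F γ 0 0 * z + Mc F γ 0 1) := by rw [ha, hb]; ring
    rw [act, act, hjf', h1, mul_div_assoc]
  calc slash F w t (deltaP F ι ℘ g) γ z
      = detL F γ' ^ t * jf F γ' (P * z) ^ (-w) * g (act F γ' (P * z)) := by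
        rw [slash, hdet, hjf', hact']; rfl
    _ = g (P * z) := hg γ' hγ' (P * z) hPz
    _ = deltaP F ι ℘ g z := rfl

lemma Ep_transform (hι : Function.Injective ι) {℘ : Polynomial Fq} (h℘ : ℘ ≠ 0)
    {π : L} (hπ : π ≠ 0) (E : L → L)
    (hE : EFunEq F {γ : GL (Fin 2) F | InGamma0 F ι ⊤ γ} π E)
    (𝔪 : Ideal (Polynomial Fq)) (γ : GL (Fin 2) F)
    (hγ : InGamma0 F ι (𝔪 * Ideal.span {℘}) γ) {z : L} (hz : z ∈ Omega F) :
    Ep F ι ℘ E (act F γ z) = (detL F γ)⁻¹ * jf F γ z ^ 2 * Ep F ι ℘ E z := by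
  obtain ⟨γ', hγ', ha, hb, hcc, hd, hdet⟩ := exists_scaled F ι hι ℘ 𝔪 γ hγ
  set P := iL F ι ℘ with hP
  have hP0 : P ≠ 0 := iL_ne_zero F ι hι h℘
  have hPz : P * z ∈ Omega F := mul_mem_Omega F (iL_mem F ι ℘) hP0 hz
  have hjf' : jf F γ' (P * z) = jf F γ z := by
    simp only [jf]; rw [← hd, ← hcc]; ring
  have hact' : act F γ' (P * z) = P * act F γ z := by
    have h1 : Mc F γ' 0 0 * (P * z) + Mc F γ' 0 1
        = P * (Mc F γ 0 0 * z + Mc F γ 0 1) := by rw [ha, hb]; ring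
    rw [act, act, hjf', h1, mul_div_assoc]
  have hJ : jf F γ z ≠ 0 := jf_ne_zero F γ hz
  have hD : detL F γ ≠ 0 := detL_ne_zero F γ
  have h1 := hE γ (InGamma0_mono F ι le_top hγ) z hz
  have h2 := hE γ' (InGamma0_mono F ι le_top hγ') (P * z) hPz
  rw [hact', hdet, hjf'] at h2
  show E (act F γ z) - P * E (P * act F γ z) = _
  rw [h1, h2, ← hcc, Ep, deltaP, ← hP]
  field_simp
  ring

lemma E_deltaP (hι : Function.Injective ι) {℘ : Polynomial Fq} (h℘ : ℘ ≠ 0)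
    (E : L → L) (z : L) :
    E (iL F ι ℘ * z) = (iL F ι ℘)⁻¹ * (E z - Ep F ι ℘ E z) := by
  have hP0 : iL F ι ℘ ≠ 0 := iL_ne_zero F ι hι h℘
  rw [Ep, deltaP]
  field_simp
  ring

end Transf
section CTransf
set_option linter.unusedSectionVars false
variable {L : Type*} [Field L] {Fq : Type*} [Field Fq] [Fintype Fq]
variable (F : Subfield L) (ι : Polynomial Fq →+* F)

lemma inv_mul_sq_pow (D J : L) (s : ℕ) :
    (D⁻¹ * J ^ 2) ^ s = D ^ (-(s : ℤ)) * J ^ (2 * (s : ℤ)) := by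
  rw [mul_pow, inv_pow, ← zpow_natCast D s, ← zpow_neg, ← pow_mul,
    ← zpow_natCast J (2 * s)]
  push_cast
  ring_nf

lemma modular_value {a : Ideal (Polynomial Fq)} (w t : ℤ) (g : L → L)
    (hg : IsModularOn F ι a w t g) (γ : GL (Fin 2) F) (hγ : InGamma0 F ι a γ)
    {z : L} (hz : z ∈ Omega F) :
    g (act F γ z) = detL F γ ^ (-t) * jf F γ z ^ w * g z := by
  have h := hg γ hγ z hz
  rw [slash] at h
  have hD : detL F γ ≠ 0 := detL_ne_zero F γ
  have hJ : jf F γ z ≠ 0 := jf_ne_zero F γ hz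
  calc g (act F γ z)
      = (detL F γ ^ (-t) * detL F γ ^ t) * (jf F γ z ^ w * jf F γ z ^ (-w)) *
        g (act F γ z) := by
        rw [← zpow_add₀ hD, ← zpow_add₀ hJ]; simp
    _ = detL F γ ^ (-t) * jf F γ z ^ w *
        (detL F γ ^ t * jf F γ z ^ (-w) * g (act F γ z)) := by ring
    _ = detL F γ ^ (-t) * jf F γ z ^ w * g z := by rw [h]

lemma c_transform (hι : Function.Injective ι) {℘ : Polynomial Fq} (h℘ : ℘ ≠ 0)
    (𝔪 : Ideal (Polynomial Fq)) {π : L} (hπ : π ≠ 0) (E : L → L)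
    (hE : EFunEq F {γ : GL (Fin 2) F | InGamma0 F ι ⊤ γ} π E)
    (k m : ℤ) (ℓ : ℕ) (fE : ℕ → L → L)
    (hmod : ∀ i ≤ ℓ, IsModularOn F ι 𝔪 (k - 2 * (i : ℤ)) (m - (i : ℤ)) (fE i))
    (c : ℕ → L → L)
    (hc : ∀ j z, c j z = ∑ s ∈ Finset.range (ℓ - j + 1),
      ((s + j).choose j : L) * iL F ι ℘ ^ (-((s : ℤ) + (j : ℤ))) *
        (-(Ep F ι ℘ E z)) ^ s * deltaP F ι ℘ (fE (s + j)) z)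
    (j : ℕ) (hj : j ≤ ℓ) (γ : GL (Fin 2) F)
    (hγ : InGamma0 F ι (𝔪 * Ideal.span {℘}) γ) {z : L} (hz : z ∈ Omega F) :
    c j (act F γ z) =
      detL F γ ^ ((j : ℤ) - m) * jf F γ z ^ (k - 2 * (j : ℤ)) * c j z := by
  set D := detL F γ with hDdef
  set J := jf F γ z with hJdef
  have hD : D ≠ 0 := detL_ne_zero F γ
  have hJ : J ≠ 0 := jf_ne_zero F γ hz
  have hEp := Ep_transform F ι hι h℘ hπ E hE 𝔪 γ hγ hz
  rw [hc, hc, Finset.mul_sum]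
  refine Finset.sum_congr rfl ?_
  intro s hs
  have hsj : s + j ≤ ℓ := by
    have := Finset.mem_range.mp hs; omega
  have hδ := modular_value F ι (k - 2 * ((s + j : ℕ) : ℤ)) (m - ((s + j : ℕ) : ℤ))
    (deltaP F ι ℘ (fE (s + j)))
    (deltaP_modular F ι hι h℘ 𝔪 _ _ (fE (s + j)) (hmod (s + j) hsj)) γ hγ hz
  have hneg : (-(Ep F ι ℘ E (act F γ z))) ^ s
      = (D⁻¹ * J ^ 2) ^ s * (-(Ep F ι ℘ E z)) ^ s := by
    rw [hEp, ← mul_neg, mul_pow]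
  rw [hneg, hδ, inv_mul_sq_pow]
  have key : D ^ (-(s : ℤ)) * J ^ (2 * (s : ℤ)) *
      (D ^ (-(m - ((s + j : ℕ) : ℤ))) * J ^ (k - 2 * ((s + j : ℕ) : ℤ)))
      = D ^ ((j : ℤ) - m) * J ^ (k - 2 * (j : ℤ)) := by
    rw [mul_mul_mul_comm, ← zpow_add₀ hD, ← zpow_add₀ hJ,
      show -(s : ℤ) + -(m - ((s + j : ℕ) : ℤ)) = (j : ℤ) - m by push_cast; ring,
      show 2 * (s : ℤ) + (k - 2 * ((s + j : ℕ) : ℤ)) = k - 2 * (j : ℤ) by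
        push_cast; ring]
  linear_combination (((s + j).choose j : L) * iL F ι ℘ ^ (-((s : ℤ) + (j : ℤ))) *
    (-(Ep F ι ℘ E z)) ^ s * deltaP F ι ℘ (fE (s + j)) z) * key

end CTransf
section Expand
set_option linter.unusedSectionVars false
variable {L : Type*} [Field L] {Fq : Type*} [Field Fq] [Fintype Fq]
variable (F : Subfield L) (ι : Polynomial Fq →+* F)

lemma deltaP_expansion (hι : Function.Injective ι) {℘ : Polynomial Fq} (h℘ : ℘ ≠ 0)
    (E : L → L) (ℓ : ℕ) (fE : ℕ → L → L) (f : L → L)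
    (hf : ∀ z, f z = ∑ i ∈ Finset.range (ℓ + 1), fE i z * E z ^ i)
    (c : ℕ → L → L)
    (hc : ∀ j z, c j z = ∑ s ∈ Finset.range (ℓ - j + 1),
      ((s + j).choose j : L) * iL F ι ℘ ^ (-((s : ℤ) + (j : ℤ))) *
        (-(Ep F ι ℘ E z)) ^ s * deltaP F ι ℘ (fE (s + j)) z)
    (z : L) :
    deltaP F ι ℘ f z = ∑ j ∈ Finset.range (ℓ + 1), c j z * E z ^ j := by
  set P := iL F ι ℘ with hP
  have hP0 : P ≠ 0 := iL_ne_zero F ι hι h℘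
  have hEP : E (P * z) = P⁻¹ * ((-(Ep F ι ℘ E z)) + E z) := by
    rw [E_deltaP F ι hι h℘ E z, ← hP]; ring_nf
  calc deltaP F ι ℘ f z
      = ∑ i ∈ Finset.range (ℓ + 1), fE i (P * z) *
          ∑ s ∈ Finset.range (i + 1),
            (P⁻¹) ^ i * ((-(Ep F ι ℘ E z)) ^ s * E z ^ (i - s) * (i.choose s : L)) := by
        rw [deltaP, hf]
        refine Finset.sum_congr rfl fun i _ => ?_
        rw [hEP, mul_pow, add_pow, Finset.mul_sum]
    _ = ∑ i ∈ Finset.range (ℓ + 1), ∑ s ∈ Finset.range (i + 1),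
          fE i (P * z) * ((P⁻¹) ^ i *
            ((-(Ep F ι ℘ E z)) ^ s * E z ^ (i - s) * (i.choose s : L))) := by
        refine Finset.sum_congr rfl fun i _ => Finset.mul_sum _ _ _
    _ = ∑ x ∈ (Finset.range (ℓ + 1)).sigma (fun i => Finset.range (i + 1)),
          fE x.1 (P * z) * ((P⁻¹) ^ x.1 *
            ((-(Ep F ι ℘ E z)) ^ x.2 * E z ^ (x.1 - x.2) * (x.1.choose x.2 : L))) := by
        rw [Finset.sum_sigma']
    _ = ∑ y ∈ (Finset.range (ℓ + 1)).sigma (fun j => Finset.range (ℓ - j + 1)),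
          (((y.2 + y.1).choose y.1 : L) * P ^ (-((y.2 : ℤ) + (y.1 : ℤ))) *
            (-(Ep F ι ℘ E z)) ^ y.2 * deltaP F ι ℘ (fE (y.2 + y.1)) z) * E z ^ y.1 := by
        refine Finset.sum_nbij' (fun x => ⟨x.1 - x.2, x.2⟩) (fun y => ⟨y.2 + y.1, y.2⟩)
          ?_ ?_ ?_ ?_ ?_
        · rintro ⟨i, s⟩ hx
          simp only [Finset.mem_sigma, Finset.mem_range] at hx ⊢
          omega
        · rintro ⟨j, s⟩ hy
          simp only [Finset.mem_sigma, Finset.mem_range] at hy ⊢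
          omega
        · rintro ⟨i, s⟩ hx
          simp only [Finset.mem_sigma, Finset.mem_range] at hx
          ext <;> simp <;> omega
        · rintro ⟨j, s⟩ hy
          simp only [Finset.mem_sigma, Finset.mem_range] at hy
          ext <;> simp <;> omega
        · rintro ⟨i, s⟩ hx
          simp only [Finset.mem_sigma, Finset.mem_range] at hx
          have hs : s ≤ i := by omega
          have h1 : s + (i - s) = i := by omega
          have h2 : (i.choose (i - s) : L) = (i.choose s : L) := by
            rw [Nat.choose_symm hs]
          have h3 : P ^ (-((s : ℤ) + ((i - s : ℕ) : ℤ))) = (P⁻¹) ^ i := by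
            rw [show -((s : ℤ) + ((i - s : ℕ) : ℤ)) = -(i : ℤ) by omega,
              zpow_neg, zpow_natCast, inv_pow]
          simp only [h1, h2, h3]
          rw [deltaP]
          ring
    _ = ∑ j ∈ Finset.range (ℓ + 1), c j z * E z ^ j := by
        rw [Finset.sum_sigma]
        refine Finset.sum_congr rfl fun j _ => ?_
        rw [hc, Finset.sum_mul]

end Expand
/-- Degeneracy map on quasi-modular functions (Proposition 5.7). -/
theorem degeneracy_map_quasi_modular
    {L : Type*} [Field L] {Fq : Type*} [Field Fq] [Fintype Fq]
    (F : Subfield L) (ι : Polynomial Fq →+* F) (hι : Function.Injective ι)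
    (℘ : Polynomial Fq) (hmon : ℘.Monic) (hirr : Irreducible ℘)
    (𝔪 : Ideal (Polynomial Fq)) (h𝔪 : ¬ 𝔪 ≤ Ideal.span {℘})
    (π : L) (hπ : π ≠ 0) (E : L → L)
    (hE : EFunEq F {γ : GL (Fin 2) F | InGamma0 F ι ⊤ γ} π E)
    (k m : ℤ) (ℓ : ℕ) (fE : ℕ → L → L)
    (hmod : ∀ i ≤ ℓ, IsModularOn F ι 𝔪 (k - 2 * (i : ℤ)) (m - (i : ℤ)) (fE i))
    (f : L → L)
    (hf : ∀ z, f z = ∑ i ∈ Finset.range (ℓ + 1), fE i z * E z ^ i)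
    (c : ℕ → L → L)
    (hc : ∀ j z, c j z = ∑ s ∈ Finset.range (ℓ - j + 1),
      ((s + j).choose j : L) * iL F ι ℘ ^ (-((s : ℤ) + (j : ℤ))) *
        (-(Ep F ι ℘ E z)) ^ s * deltaP F ι ℘ (fE (s + j)) z) :
    (∀ z ∈ Omega F,
        deltaP F ι ℘ f z = ∑ j ∈ Finset.range (ℓ + 1), c j z * E z ^ j) ∧
      (∀ j ≤ ℓ, IsModularOn F ι (𝔪 * Ideal.span {℘})
        (k - 2 * (j : ℤ)) (m - (j : ℤ)) (c j)) ∧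
      (∃ fam : ℕ → L → L,
        IsQM F {γ : GL (Fin 2) F | InGamma0 F ι (𝔪 * Ideal.span {℘}) γ} k m ℓ
          (deltaP F ι ℘ f) fam) ∧
      (∀ z, c ℓ z = iL F ι ℘ ^ (-(ℓ : ℤ)) * deltaP F ι ℘ (fE ℓ) z) ∧
      ((∃ z ∈ Omega F, fE ℓ z ≠ 0) → ∃ z ∈ Omega F, c ℓ z ≠ 0) := by
  have h℘ : ℘ ≠ 0 := hmon.ne_zero
  have hP0 : iL F ι ℘ ≠ 0 := iL_ne_zero F ι hι h℘
  have part1 : ∀ z : L, deltaP F ι ℘ f z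
      = ∑ j ∈ Finset.range (ℓ + 1), c j z * E z ^ j :=
    deltaP_expansion F ι hι h℘ E ℓ fE f hf c hc
  have part2 : ∀ j ≤ ℓ, IsModularOn F ι (𝔪 * Ideal.span {℘})
      (k - 2 * (j : ℤ)) (m - (j : ℤ)) (c j) := by
    intro j hj γ hγ z hz
    have hD := detL_ne_zero F γ
    have hJ := jf_ne_zero F γ hz
    simp only [slash]
    rw [c_transform F ι hι h℘ 𝔪 hπ E hE k m ℓ fE hmod c hc j hj γ hγ hz]
    have h1 : detL F γ ^ (m - (j : ℤ)) * detL F γ ^ ((j : ℤ) - m) = 1 := by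
      rw [← zpow_add₀ hD, show (m - (j:ℤ)) + ((j:ℤ) - m) = 0 by ring, zpow_zero]
    have h2 : jf F γ z ^ (-(k - 2 * (j : ℤ))) * jf F γ z ^ (k - 2 * (j : ℤ)) = 1 := by
      rw [← zpow_add₀ hJ, show -(k - 2*(j:ℤ)) + (k - 2*(j:ℤ)) = 0 by ring, zpow_zero]
    calc detL F γ ^ (m - (j:ℤ)) * jf F γ z ^ (-(k - 2*(j:ℤ))) *
          (detL F γ ^ ((j:ℤ) - m) * jf F γ z ^ (k - 2*(j:ℤ)) * c j z)
        = (detL F γ ^ (m - (j:ℤ)) * detL F γ ^ ((j:ℤ) - m)) *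
          (jf F γ z ^ (-(k - 2*(j:ℤ))) * jf F γ z ^ (k - 2*(j:ℤ))) * c j z := by ring
      _ = c j z := by rw [h1, h2]; ring
  have part4 : ∀ z, c ℓ z = iL F ι ℘ ^ (-(ℓ : ℤ)) * deltaP F ι ℘ (fE ℓ) z := by
    intro z
    rw [hc ℓ z, show ℓ - ℓ + 1 = 1 by omega, Finset.sum_range_one]
    norm_num
  refine ⟨fun z _ => part1 z, part2, ?_, part4, ?_⟩
  · -- quasi-modularity
    refine ⟨fun i z => ∑ j ∈ Finset.range (ℓ + 1),
      if i ≤ j then ((j.choose i : L) * (-π⁻¹) ^ i * c j z * E z ^ (j - i)) else 0,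
      ?_, ?_⟩
    · intro z _
      calc (∑ j ∈ Finset.range (ℓ + 1),
            if 0 ≤ j then ((j.choose 0 : L) * (-π⁻¹) ^ 0 * c j z * E z ^ (j - 0)) else 0)
          = ∑ j ∈ Finset.range (ℓ + 1), c j z * E z ^ j := by
            refine Finset.sum_congr rfl fun j _ => ?_
            simp
        _ = deltaP F ι ℘ f z := (part1 z).symm
    · intro γ hγ z hz
      have hγ' : InGamma0 F ι (𝔪 * Ideal.span {℘}) γ := hγ
      have hD := detL_ne_zero F γ
      have hJ := jf_ne_zero F γ hz
      have hEq := hE γ (InGamma0_mono F ι le_top hγ') z hz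
      simp only [slash]
      calc detL F γ ^ m * jf F γ z ^ (-k) * deltaP F ι ℘ f (act F γ z)
          = ∑ j ∈ Finset.range (ℓ + 1),
              detL F γ ^ m * jf F γ z ^ (-k) * (c j (act F γ z) * E (act F γ z) ^ j) := by
            rw [part1 (act F γ z), Finset.mul_sum]
        _ = ∑ j ∈ Finset.range (ℓ + 1),
              c j z * ((-(π⁻¹ * (Mc F γ 1 0 / jf F γ z))) + E z) ^ j := by
            refine Finset.sum_congr rfl fun j hj => ?_
            have hjl : j ≤ ℓ := by have := Finset.mem_range.mp hj; omega
            rw [c_transform F ι hι h℘ 𝔪 hπ E hE k m ℓ fE hmod c hc j hjl γ hγ' hz, hEq]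
            have hX : E z - Mc F γ 1 0 / (π * jf F γ z)
                = (-(π⁻¹ * (Mc F γ 1 0 / jf F γ z))) + E z := by
              rw [mul_comm π (jf F γ z), ← div_div, div_eq_inv_mul]; ring
            rw [hX, mul_pow, inv_mul_sq_pow]
            have key2 : detL F γ ^ m * jf F γ z ^ (-k) *
                (detL F γ ^ ((j:ℤ) - m) * jf F γ z ^ (k - 2*(j:ℤ))) *
                (detL F γ ^ (-(j:ℤ)) * jf F γ z ^ (2 * (j : ℤ))) = 1 := by
              calc detL F γ ^ m * jf F γ z ^ (-k) *
                  (detL F γ ^ ((j:ℤ) - m) * jf F γ z ^ (k - 2*(j:ℤ))) *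
                  (detL F γ ^ (-(j:ℤ)) * jf F γ z ^ (2 * (j : ℤ)))
                  = (detL F γ ^ m * detL F γ ^ ((j:ℤ) - m) * detL F γ ^ (-(j:ℤ))) *
                    (jf F γ z ^ (-k) * jf F γ z ^ (k - 2*(j:ℤ)) *
                      jf F γ z ^ (2 * (j : ℤ))) := by ring
                _ = detL F γ ^ (m + ((j:ℤ) - m) + (-(j:ℤ))) *
                    jf F γ z ^ (-k + (k - 2*(j:ℤ)) + 2 * (j:ℤ)) := by
                    rw [← zpow_add₀ hD, ← zpow_add₀ hD, ← zpow_add₀ hJ, ← zpow_add₀ hJ]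
                _ = 1 := by
                    rw [show m + ((j:ℤ) - m) + (-(j:ℤ)) = 0 by ring,
                      show -k + (k - 2*(j:ℤ)) + 2 * (j:ℤ) = 0 by ring]
                    simp
            linear_combination (c j z *
              ((-(π⁻¹ * (Mc F γ 1 0 / jf F γ z))) + E z) ^ j) * key2
        _ = ∑ j ∈ Finset.range (ℓ + 1), ∑ i ∈ Finset.range (ℓ + 1),
              (if i ≤ j then
                c j z * ((-π⁻¹) ^ i * (Mc F γ 1 0 / jf F γ z) ^ i * E z ^ (j - i) *
                  (j.choose i : L)) else 0) := by
            refine Finset.sum_congr rfl fun j hj => ?_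
            have hjl : j ≤ ℓ := by have := Finset.mem_range.mp hj; omega
            rw [add_pow, Finset.mul_sum]
            have e2 : ∑ i ∈ Finset.range (j + 1),
                c j z * ((-(π⁻¹ * (Mc F γ 1 0 / jf F γ z))) ^ i * E z ^ (j - i) *
                  (j.choose i : L))
                = ∑ i ∈ Finset.range (j + 1),
                  (if i ≤ j then
                    c j z * ((-π⁻¹) ^ i * (Mc F γ 1 0 / jf F γ z) ^ i * E z ^ (j - i) *
                      (j.choose i : L)) else 0) := by
              refine Finset.sum_congr rfl fun i hi => ?_
              rw [if_pos (by have := Finset.mem_range.mp hi; omega)]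
              rw [show (-(π⁻¹ * (Mc F γ 1 0 / jf F γ z))) = (-π⁻¹) * (Mc F γ 1 0 / jf F γ z)
                by ring, mul_pow]
            rw [e2]
            refine Finset.sum_subset (Finset.range_subset_range.mpr (by omega)) ?_
            intro x hx hnx
            rw [if_neg (by simp only [Finset.mem_range] at hnx; omega)]
        _ = ∑ i ∈ Finset.range (ℓ + 1), ∑ j ∈ Finset.range (ℓ + 1),
              (if i ≤ j then
                c j z * ((-π⁻¹) ^ i * (Mc F γ 1 0 / jf F γ z) ^ i * E z ^ (j - i) *
                  (j.choose i : L)) else 0) := Finset.sum_comm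
        _ = ∑ i ∈ Finset.range (ℓ + 1),
              (∑ j ∈ Finset.range (ℓ + 1),
                if i ≤ j then ((j.choose i : L) * (-π⁻¹) ^ i * c j z * E z ^ (j - i))
                else 0) * (Mc F γ 1 0 / jf F γ z) ^ i := by
            refine Finset.sum_congr rfl fun i _ => ?_
            rw [Finset.sum_mul]
            refine Finset.sum_congr rfl fun j _ => ?_
            rw [ite_mul, zero_mul]
            split
            · ring
            · rfl
  · -- depth preservation
    rintro ⟨z0, hz0, hfz⟩
    refine ⟨(iL F ι ℘)⁻¹ * z0, ?_, ?_⟩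
    · exact mul_mem_Omega F (F.inv_mem (iL_mem F ι ℘)) (inv_ne_zero hP0) hz0
    · rw [part4, deltaP, ← mul_assoc, mul_inv_cancel₀ hP0, one_mul]
      exact mul_ne_zero (zpow_ne_zero _ hP0) hfz

end DrinfeldQM
end
end

section
/- (Lemma 5.10) Assume 𝔽_q(T) ⊆ F, let 𝔪 ⊆ A be a nonzero ideal with 𝔭 ∤ 𝔪, let n ≥ 0, and assume E satisfies its functional equation for all γ ∈ GL₂(A). Let f : Ω → L be modular of weight k−2n and type m−n for Γ₀(𝔪𝔭). Then, pointwise on Ω: U_𝔭(f·Eⁿ) = U_𝔭(f·E_𝔭ⁿ) − Σ_{h=1}^{n} (n choose h)·(−℘)^h·U_𝔭(f·E^{n−h})·E^h. -/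
noncomputable section

namespace DrinfeldQM

variable {L : Type*} [Field L]

variable {Fq : Type*} [Field Fq] [Fintype Fq]

/-- Lemma 5.10: `U_𝔭(f·Eⁿ) = U_𝔭(f·E_𝔭ⁿ) - ∑_{h=1}^{n} (n choose h)(-℘)ʰ U_𝔭(f·E^{n-h}) Eʰ`. -/
theorem Up_mul_E_pow_rec
    {L : Type*} [Field L] {Fq : Type*} [Field Fq] [Fintype Fq]
    (F : Subfield L) (ι : Polynomial Fq →+* F) (hι : Function.Injective ι)
    (℘ : Polynomial Fq) (hmon : ℘.Monic) (hirr : Irreducible ℘)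
    (𝔪 : Ideal (Polynomial Fq)) (h𝔪 : ¬ 𝔪 ≤ Ideal.span {℘})
    (π : L) (hπ : π ≠ 0) (E : L → L)
    (hE : EFunEq F {γ : GL (Fin 2) F | InGamma0 F ι ⊤ γ} π E)
    (k m : ℤ) (n : ℕ) (f : L → L)
    (hf : IsModularOn F ι (𝔪 * Ideal.span {℘}) (k - 2 * (n : ℤ)) (m - (n : ℤ)) f) :
    ∀ z ∈ Omega F,
      UP F ι ℘ (fun w => f w * E w ^ n) z =
        UP F ι ℘ (fun w => f w * Ep F ι ℘ E w ^ n) z -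
          ∑ h ∈ Finset.Icc 1 n,
            (n.choose h : L) * (-(iL F ι ℘)) ^ h *
              UP F ι ℘ (fun w => f w * E w ^ (n - h)) z * E z ^ h := by

  intro z hz
  have h℘ne : iL F ι ℘ ≠ 0 := by
    simp only [iL]
    intro h
    apply hmon.ne_zero
    apply hι
    rw [map_zero]
    exact Subtype.coe_injective (by simpa using h)
  -- translation invariance of E
  have keyE : ∀ Q : Polynomial Fq, E (z + iL F ι Q) = E z := by
    intro Q
    set q : F := ι Q with hq
    have hmul1 : (!![(1:F), q; 0, 1]) * (!![(1:F), -q; 0, 1]) = 1 := by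
      ext i j
      fin_cases i <;> fin_cases j <;>
        simp [Matrix.mul_apply, Fin.sum_univ_two, Matrix.one_apply]
    have hmul2 : (!![(1:F), -q; 0, 1]) * (!![(1:F), q; 0, 1]) = 1 := by
      ext i j
      fin_cases i <;> fin_cases j <;>
        simp [Matrix.mul_apply, Fin.sum_univ_two, Matrix.one_apply]
    let γ : GL (Fin 2) F := ⟨!![(1:F), q; 0, 1], !![(1:F), -q; 0, 1], hmul1, hmul2⟩
    have hcoe : (γ : Matrix (Fin 2) (Fin 2) F) = !![(1:F), q; 0, 1] := rfl
    have hMc00 : Mc F γ 0 0 = 1 := by simp [Mc, hcoe]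
    have hMc01 : Mc F γ 0 1 = iL F ι Q := by simp [Mc, hcoe, iL, hq]
    have hMc10 : Mc F γ 1 0 = 0 := by simp [Mc, hcoe]
    have hMc11 : Mc F γ 1 1 = 1 := by simp [Mc, hcoe]
    have hjf : jf F γ z = 1 := by rw [jf, hMc10, hMc11]; ring
    have hdet : detL F γ = 1 := by
      simp [detL, hcoe, Matrix.det_fin_two_of]
    have hact : act F γ z = z + iL F ι Q := by
      rw [act, hjf, hMc00, hMc01, div_one, one_mul]
    have hγ : InGamma0 F ι ⊤ γ := by
      refine ⟨!![(1:Polynomial Fq), Q; 0, 1], ?_, ?_, trivial⟩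
      · intro i j
        fin_cases i <;> fin_cases j <;>
          simp [iL, Mc, hcoe, hq]
      · simp [Matrix.det_fin_two_of]
    have hE' := hE γ hγ z hz
    rw [hact, hjf, hdet, hMc10] at hE'
    simpa using hE'
  set ℘p : L := iL F ι ℘ with h℘p
  set Qc : (Fin ℘.natDegree → Fq) → Polynomial Fq :=
    fun c => ∑ i : Fin ℘.natDegree, Polynomial.C (c i) * Polynomial.X ^ (i : ℕ) with hQc
  set w : (Fin ℘.natDegree → Fq) → L := fun c => (z + iL F ι (Qc c)) / ℘p with hw
  have hEp : ∀ c, Ep F ι ℘ E (w c) = E (w c) - ℘p * E z := by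
    intro c
    have hcan : ℘p * w c = z + iL F ι (Qc c) := by
      rw [hw]; field_simp
    simp only [Ep, deltaP, ← h℘p, hcan, keyE (Qc c)]
  have key2 : UP F ι ℘ (fun u => f u * Ep F ι ℘ E u ^ n) z
      = ∑ h ∈ Finset.range (n+1), (n.choose h : L) * (-℘p)^h *
          UP F ι ℘ (fun u => f u * E u ^ (n - h)) z * E z ^ h := by
    have step1 : UP F ι ℘ (fun u => f u * Ep F ι ℘ E u ^ n) z
        = ∑ c : Fin ℘.natDegree → Fq, ∑ h ∈ Finset.range (n+1),
            (n.choose h : L) * (-℘p)^h * (f (w c) * E (w c) ^ (n - h)) * E z ^ h := by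
      rw [UP]
      refine Finset.sum_congr rfl (fun c _ => ?_)
      have harg : (z + iL F ι (∑ i : Fin ℘.natDegree,
          Polynomial.C (c i) * Polynomial.X ^ (i : ℕ))) / iL F ι ℘ = w c := rfl
      rw [harg, hEp c, sub_eq_add_neg, add_comm, add_pow, Finset.mul_sum]
      refine Finset.sum_congr rfl (fun h _ => ?_)
      rw [neg_mul_eq_neg_mul, mul_pow]
      ring
    rw [step1, Finset.sum_comm]
    refine Finset.sum_congr rfl (fun h _ => ?_)
    rw [UP, ← Finset.sum_mul, ← Finset.mul_sum]
  rw [key2, Finset.sum_range_succ']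
  have h0 : (n.choose 0 : L) * (-℘p)^0 * UP F ι ℘ (fun u => f u * E u ^ (n - 0)) z * E z ^ 0
      = UP F ι ℘ (fun u => f u * E u ^ n) z := by
    simp
  have hIcc : ∑ h ∈ Finset.Icc 1 n,
        (n.choose h : L) * (-℘p) ^ h * UP F ι ℘ (fun u => f u * E u ^ (n - h)) z * E z ^ h
      = ∑ i ∈ Finset.range n,
        (n.choose (i+1) : L) * (-℘p) ^ (i+1) *
          UP F ι ℘ (fun u => f u * E u ^ (n - (i+1))) z * E z ^ (i+1) := by
    rw [← Finset.Ico_add_one_right_eq_Icc, Finset.sum_Ico_eq_sum_range]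
    simp only [Nat.add_sub_cancel]
    refine Finset.sum_congr rfl (fun i _ => ?_)
    rw [add_comm 1 i]
  rw [h0, hIcc]
  ring


end DrinfeldQM
end
end

section
/- (Action of U_𝔭 on f·Eⁿ, Theorem 5.11) Assume 𝔽_q(T) ⊆ F, let 𝔪 ⊆ A be a nonzero ideal with 𝔭 ∤ 𝔪, let n ≥ 0, and assume E satisfies its functional equation for all γ ∈ GL₂(A). Let f : Ω → L be modular of weight k−2n and type m−n for Γ₀(𝔪𝔭). Then, pointwise on Ω: U_𝔭(f·Eⁿ) = Σ_{h=0}^{n} (n choose h)·℘^h·U_𝔭(f·E_𝔭^{n−h})·E^h. -/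
noncomputable section

namespace DrinfeldQM

variable {L : Type*} [Field L]

variable {Fq : Type*} [Field Fq] [Fintype Fq]

/-- Translation invariance of `E`: `E(z + Q) = E(z)` for `Q ∈ A`. -/
lemma translate_E
    {L : Type*} [Field L] {Fq : Type*} [Field Fq] [Fintype Fq]
    (F : Subfield L) (ι : Polynomial Fq →+* F) (π : L) (E : L → L)
    (hE : EFunEq F {γ : GL (Fin 2) F | InGamma0 F ι ⊤ γ} π E)
    (Q : Polynomial Fq) (z : L) (hz : z ∈ Omega F) :
    E (z + iL F ι Q) = E z := by
  set q : F := ι Q with hq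
  have hmul : (!![(1:F), q; 0, 1]) * (!![(1:F), -q; 0, 1]) = 1 := by
    simp [Matrix.mul_fin_two, Matrix.one_fin_two]
  have hmul' : (!![(1:F), -q; 0, 1]) * (!![(1:F), q; 0, 1]) = 1 := by
    simp [Matrix.mul_fin_two, Matrix.one_fin_two]
  set γ : GL (Fin 2) F := ⟨!![1, q; 0, 1], !![1, -q; 0, 1], hmul, hmul'⟩ with hγ
  have hMc00 : Mc F γ 0 0 = 1 := by simp [Mc, hγ]
  have hMc01 : Mc F γ 0 1 = (q : L) := by simp [Mc, hγ]
  have hMc10 : Mc F γ 1 0 = 0 := by simp [Mc, hγ]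
  have hMc11 : Mc F γ 1 1 = 1 := by simp [Mc, hγ]
  have hdet : detL F γ = 1 := by
    simp [detL, hγ, Matrix.det_fin_two_of]
  have hmem : γ ∈ {γ : GL (Fin 2) F | InGamma0 F ι ⊤ γ} := by
    refine ⟨!![1, Q; 0, 1], ?_, ?_, trivial⟩
    · intro i j
      fin_cases i <;> fin_cases j <;>
        simp [iL, Mc, hγ, hq]
    · simp [Matrix.det_fin_two_of]
  have := hE γ hmem z hz
  simp only [act, jf, hMc00, hMc01, hMc10, hMc11, hdet, zero_mul, zero_add, one_mul,
    mul_one, zero_div, sub_zero, div_one, one_pow, inv_one] at this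
  simpa [iL, hq] using this

/-- Theorem 5.11: `U_𝔭(f·Eⁿ) = ∑_{h=0}^{n} (n choose h) ℘ʰ U_𝔭(f·E_𝔭^{n-h}) Eʰ`. -/
theorem Up_mul_E_pow
    {L : Type*} [Field L] {Fq : Type*} [Field Fq] [Fintype Fq]
    (F : Subfield L) (ι : Polynomial Fq →+* F) (hι : Function.Injective ι)
    (℘ : Polynomial Fq) (hmon : ℘.Monic) (hirr : Irreducible ℘)
    (𝔪 : Ideal (Polynomial Fq)) (h𝔪 : ¬ 𝔪 ≤ Ideal.span {℘})
    (π : L) (hπ : π ≠ 0) (E : L → L)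
    (hE : EFunEq F {γ : GL (Fin 2) F | InGamma0 F ι ⊤ γ} π E)
    (k m : ℤ) (n : ℕ) (f : L → L)
    (hf : IsModularOn F ι (𝔪 * Ideal.span {℘}) (k - 2 * (n : ℤ)) (m - (n : ℤ)) f) :
    ∀ z ∈ Omega F,
      UP F ι ℘ (fun w => f w * E w ^ n) z =
        ∑ h ∈ Finset.range (n + 1),
          (n.choose h : L) * iL F ι ℘ ^ h *
            UP F ι ℘ (fun w => f w * Ep F ι ℘ E w ^ (n - h)) z * E z ^ h := by
  intro z hz
  set P : L := iL F ι ℘ with hPdef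
  have hP0 : P ≠ 0 := by
    simp only [hPdef, iL, ne_eq, ZeroMemClass.coe_eq_zero]
    intro h
    exact hmon.ne_zero (hι (by rw [h, map_zero]))
  have key : ∀ c : Fin ℘.natDegree → Fq,
      (fun w => f w * E w ^ n)
        ((z + iL F ι (∑ i : Fin ℘.natDegree, Polynomial.C (c i) * Polynomial.X ^ (i : ℕ))) / P)
      = ∑ h ∈ Finset.range (n + 1),
          (n.choose h : L) * P ^ h *
            (f ((z + iL F ι (∑ i : Fin ℘.natDegree,
                Polynomial.C (c i) * Polynomial.X ^ (i : ℕ))) / P) *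
              Ep F ι ℘ E ((z + iL F ι (∑ i : Fin ℘.natDegree,
                Polynomial.C (c i) * Polynomial.X ^ (i : ℕ))) / P) ^ (n - h)) * E z ^ h := by
    intro c
    set Q : Polynomial Fq := ∑ i : Fin ℘.natDegree, Polynomial.C (c i) * Polynomial.X ^ (i : ℕ)
    set w : L := (z + iL F ι Q) / P with hwdef
    have hPw : P * w = z + iL F ι Q := by
      rw [hwdef]; field_simp
    have hEPw : E (P * w) = E z := by
      rw [hPw]; exact translate_E F ι π E hE Q z hz
    have hEw : E w = P * E z + Ep F ι ℘ E w := by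
      simp only [Ep, deltaP, ← hPdef, hEPw]
      ring
    beta_reduce
    rw [hEw, add_pow, Finset.mul_sum]
    refine Finset.sum_congr rfl fun h _ => ?_
    rw [mul_pow]
    ring
  calc UP F ι ℘ (fun w => f w * E w ^ n) z
      = ∑ c : Fin ℘.natDegree → Fq, ∑ h ∈ Finset.range (n + 1),
          (n.choose h : L) * P ^ h *
            (f ((z + iL F ι (∑ i : Fin ℘.natDegree,
                Polynomial.C (c i) * Polynomial.X ^ (i : ℕ))) / P) *
              Ep F ι ℘ E ((z + iL F ι (∑ i : Fin ℘.natDegree,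
                Polynomial.C (c i) * Polynomial.X ^ (i : ℕ))) / P) ^ (n - h)) * E z ^ h :=
        Finset.sum_congr rfl fun c _ => key c
    _ = ∑ h ∈ Finset.range (n + 1), ∑ c : Fin ℘.natDegree → Fq,
          (n.choose h : L) * P ^ h *
            (f ((z + iL F ι (∑ i : Fin ℘.natDegree,
                Polynomial.C (c i) * Polynomial.X ^ (i : ℕ))) / P) *
              Ep F ι ℘ E ((z + iL F ι (∑ i : Fin ℘.natDegree,
                Polynomial.C (c i) * Polynomial.X ^ (i : ℕ))) / P) ^ (n - h)) * E z ^ h :=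
        Finset.sum_comm
    _ = _ := by
        refine Finset.sum_congr rfl fun h _ => ?_
        rw [← Finset.sum_mul, ← Finset.mul_sum]
        rfl

end DrinfeldQM
end
end
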